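/- (Strong monotonicity of avalanches started at the origin) Let (N, D, θ) be a sandpile model in dimension d with complete neighborhood N, and let c be a stable configuration lying within the elementary hypercube of side n. Then in the parallel evolution started from c + 1_{0^d}, every cell topples at most once: for every t ≥ 0 and every x ∈ ℤ^d, #{s < t : F^s(c + 1_{0^d})(x) ≥ θ} ∈ {0, 1}. -/

import Mathlib

/-- A sandpile model in dimension `d`: a finite nonempty neighborhood
`N ⊆ ℤ^d \ {0}` and a distribution `D` with `D v ≥ 1` for `v ∈ N`. -/
structure Sandpile (d : ℕ) where
  N : Finset (Fin d → ℤ)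
  D : (Fin d → ℤ) → ℕ
  N_nonempty : N.Nonempty
  zero_not_mem : (0 : Fin d → ℤ) ∉ N
  D_pos : ∀ v ∈ N, 1 ≤ D v

/-- The stability threshold `θ = Σ_{v ∈ N} D(v)`. -/
def Sandpile.θ {d : ℕ} (M : Sandpile d) : ℕ := ∑ v ∈ M.N, M.D v

/-- The Heaviside function: `H n = 1` if `n ≥ 0`, else `0`. -/
def Heaviside (n : ℤ) : ℕ := if 0 ≤ n then 1 else 0

/-- The parallel global rule `F`. -/
def Sandpile.F {d : ℕ} (M : Sandpile d) (c : (Fin d → ℤ) → ℕ) : (Fin d → ℤ) → ℕ :=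
  fun x => c x - M.θ * Heaviside ((c x : ℤ) - (M.θ : ℤ))
    + ∑ y ∈ M.N, M.D y * Heaviside ((c (x + y) : ℤ) - (M.θ : ℤ))

/-- A configuration is stable when every cell holds fewer than `θ` grains. -/
def Sandpile.Stable {d : ℕ} (M : Sandpile d) (c : (Fin d → ℤ) → ℕ) : Prop :=
  ∀ x, c x < M.θ

/-- A configuration is finite when its total number of grains is finite,
equivalently its support is finite. -/
def FiniteConfig {d : ℕ} (c : (Fin d → ℤ) → ℕ) : Prop :=
  (Function.support c).Finite

/-- Sequential toppling at an unstable cell `x`: remove `θ` grains from `x`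
and add `D(y−x)` grains to each `y ∈ x + N`, other cells unchanged. -/
def Sandpile.SeqStepAt {d : ℕ} (M : Sandpile d) (x : Fin d → ℤ)
    (c c' : (Fin d → ℤ) → ℕ) : Prop :=
  M.θ ≤ c x ∧
    ∀ y, c' y = (if y = x then c y - M.θ else c y)
      + (if y - x ∈ M.N then M.D (y - x) else 0)

/-- `c ⇀ c'`: a sequential toppling at some unstable cell. -/
def Sandpile.SeqStep {d : ℕ} (M : Sandpile d)
    (c c' : (Fin d → ℤ) → ℕ) : Prop :=
  ∃ x, M.SeqStepAt x c c'

/-- `c ⇀* c'`: reflexive–transitive closure of `⇀`. -/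
def Sandpile.SeqReach {d : ℕ} (M : Sandpile d)
    (c c' : (Fin d → ℤ) → ℕ) : Prop :=
  Relation.ReflTransGen M.SeqStep c c'

/-- The neighborhood is complete: every element of `ℤ^d` is a nonnegative
integer combination of elements of `N`. -/
def Sandpile.Complete {d : ℕ} (M : Sandpile d) : Prop :=
  ∀ z : Fin d → ℤ, ∃ a : (Fin d → ℤ) → ℕ, z = ∑ v ∈ M.N, (a v : ℤ) • v

/-- The configuration lies within the elementary hypercube of side `n`:
`c x = 0` for all `x ∉ {0,…,n−1}^d`. -/
def InCube {d : ℕ} (n : ℕ) (c : (Fin d → ℤ) → ℕ) : Prop :=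
  ∀ x : Fin d → ℤ, (¬ ∀ i, 0 ≤ x i ∧ x i < (n : ℤ)) → c x = 0

/-- Add one grain at cell `y` (i.e. `c + 1_y`). -/
def addGrain {d : ℕ} (c : (Fin d → ℤ) → ℕ) (y : Fin d → ℤ) : (Fin d → ℤ) → ℕ :=
  fun x => if x = y then c x + 1 else c x

namespace SandAux

open Finset

variable {d : ℕ}

/-- Toppling count of cell `x` during the first `t` steps. -/
def tc (M : Sandpile d) (a : (Fin d → ℤ) → ℕ) (t : ℕ) (x : Fin d → ℤ) : ℕ :=
  ((Finset.range t).filter (fun s => M.θ ≤ M.F^[s] a x)).card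

lemma heaviside_eq (θ c : ℕ) : Heaviside ((c : ℤ) - (θ : ℤ)) = if θ ≤ c then 1 else 0 := by
  simp [Heaviside, sub_nonneg]

lemma tc_zero (M : Sandpile d) (a : (Fin d → ℤ) → ℕ) (x : Fin d → ℤ) : tc M a 0 x = 0 := by
  simp [tc]

lemma tc_succ (M : Sandpile d) (a : (Fin d → ℤ) → ℕ) (t : ℕ) (x : Fin d → ℤ) :
    tc M a (t + 1) x = tc M a t x + (if M.θ ≤ M.F^[t] a x then 1 else 0) := by
  unfold tc
  rw [Finset.range_add_one, Finset.filter_insert]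
  split
  · rw [Finset.card_insert_of_notMem (by simp)]
  · simp

lemma tc_mono (M : Sandpile d) (a : (Fin d → ℤ) → ℕ) {s t : ℕ} (h : s ≤ t) (x : Fin d → ℤ) :
    tc M a s x ≤ tc M a t x := by
  exact Finset.card_le_card (Finset.filter_subset_filter _ (Finset.range_subset_range.2 h))

lemma theta_pos (M : Sandpile d) : 1 ≤ M.θ := by
  obtain ⟨v, hv⟩ := M.N_nonempty
  calc 1 ≤ M.D v := M.D_pos v hv
    _ ≤ M.θ := Finset.single_le_sum (fun i _ => Nat.zero_le _) hv

lemma conservation (M : Sandpile d) (a : (Fin d → ℤ) → ℕ) (t : ℕ) (x : Fin d → ℤ) :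
    M.F^[t] a x + M.θ * tc M a t x
      = a x + ∑ w ∈ M.N, M.D w * tc M a t (x + w) := by
  induction t with
  | zero => simp [tc_zero]
  | succ t ih =>
      rw [Function.iterate_succ_apply']
      set b := M.F^[t] a with hb
      have hF : M.F b x + M.θ * (if M.θ ≤ b x then 1 else 0)
          = b x + ∑ w ∈ M.N, M.D w * (if M.θ ≤ b (x + w) then 1 else 0) := by
        show (b x - M.θ * Heaviside ((b x : ℤ) - (M.θ : ℤ))
            + ∑ y ∈ M.N, M.D y * Heaviside ((b (x + y) : ℤ) - (M.θ : ℤ)))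
            + M.θ * (if M.θ ≤ b x then 1 else 0) = _
        rw [heaviside_eq]
        have hsum : ∀ y ∈ M.N, M.D y * Heaviside ((b (x + y) : ℤ) - (M.θ : ℤ))
            = M.D y * (if M.θ ≤ b (x + y) then 1 else 0) := by
          intro y _; rw [heaviside_eq]
        rw [Finset.sum_congr rfl hsum]
        split
        · next h => omega
        · omega
      rw [tc_succ, Nat.mul_add]
      simp only [← hb]
      have hrw : ∀ w ∈ M.N, M.D w * tc M a (t+1) (x+w)
          = M.D w * tc M a t (x+w) + M.D w * (if M.θ ≤ b (x + w) then 1 else 0) := by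
        intro w _; rw [tc_succ, Nat.mul_add]
      rw [Finset.sum_congr rfl hrw, Finset.sum_add_distrib]
      have := ih
      omega

/-- If every neighbor toppled at most once but the total received is ≥ θ,
then every neighbor toppled exactly once. -/
lemma fullfire (M : Sandpile d) (u : (Fin d → ℤ) → ℕ) (hu : ∀ w ∈ M.N, u w ≤ 1)
    (h : M.θ ≤ ∑ w ∈ M.N, M.D w * u w) : ∀ w ∈ M.N, u w = 1 := by
  intro w₀ hw₀
  by_contra h0
  have hu0 : u w₀ = 0 := by have := hu w₀ hw₀; omega
  have hlt : ∑ w ∈ M.N, M.D w * u w < ∑ w ∈ M.N, M.D w := by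
    apply Finset.sum_lt_sum
    · intro i hi
      have := hu i hi
      nlinarith [M.D_pos i hi]
    · exact ⟨w₀, hw₀, by rw [hu0]; have := M.D_pos w₀ hw₀; simp only [mul_zero]; omega⟩
  have : M.θ = ∑ w ∈ M.N, M.D w := rfl
  omega

end SandAux
namespace SandAux

variable {d : ℕ}

lemma support_F_finite (M : Sandpile d) (c₀ : (Fin d → ℤ) → ℕ)
    (h : (Function.support c₀).Finite) : (Function.support (M.F c₀)).Finite := by
  have hsub : Function.support (M.F c₀) ⊆
      Function.support c₀ ∪ ⋃ y ∈ (M.N : Set (Fin d → ℤ)), (fun x => x + y) ⁻¹' Function.support c₀ := by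
    intro x hx
    by_contra hmem
    simp only [Set.mem_union, Set.mem_iUnion, not_or, not_exists] at hmem
    have h1 : c₀ x = 0 := by
      by_contra h'
      exact hmem.1 h'
    have h2 : ∀ y ∈ M.N, c₀ (x + y) < M.θ := by
      intro y hy
      by_contra h'
      push_neg at h'
      have hne : c₀ (x + y) ≠ 0 := by have := theta_pos M; omega
      exact (hmem.2 y hy) hne
    have : M.F c₀ x = 0 := by
      show (c₀ x - M.θ * Heaviside ((c₀ x : ℤ) - (M.θ : ℤ))
          + ∑ y ∈ M.N, M.D y * Heaviside ((c₀ (x + y) : ℤ) - (M.θ : ℤ))) = 0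
      rw [h1]
      have : ∀ y ∈ M.N, M.D y * Heaviside ((c₀ (x + y) : ℤ) - (M.θ : ℤ)) = 0 := by
        intro y hy
        rw [heaviside_eq]
        have := h2 y hy
        simp [Nat.not_le.2 this]
      rw [Finset.sum_eq_zero this]
      simp
    exact hx this
  refine Set.Finite.subset (h.union ?_) hsub
  refine Set.Finite.biUnion (M.N.finite_toSet) (fun y _ => ?_)
  exact Set.Finite.preimage (Set.injOn_of_injective (fun a b hab => by simpa using hab)) h

lemma support_iter_finite (M : Sandpile d) (a : (Fin d → ℤ) → ℕ)
    (h : (Function.support a).Finite) (s : ℕ) : (Function.support (M.F^[s] a)).Finite := by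
  induction s with
  | zero => simpa
  | succ s ih => rw [Function.iterate_succ_apply']; exact support_F_finite M _ ih

lemma toppled_finite (M : Sandpile d) (a : (Fin d → ℤ) → ℕ)
    (h : (Function.support a).Finite) (t : ℕ) : {y | 1 ≤ tc M a t y}.Finite := by
  have hsub : {y | 1 ≤ tc M a t y} ⊆ ⋃ s ∈ Finset.range t, Function.support (M.F^[s] a) := by
    intro y hy
    simp only [Set.mem_setOf_eq] at hy
    obtain ⟨s, hs⟩ := Finset.card_pos.1 hy
    simp only [Finset.mem_filter, Finset.mem_range] at hs
    have hne : M.F^[s] a y ≠ 0 := by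
      have h2 := hs.2
      have := theta_pos M
      omega
    exact Set.mem_iUnion₂.2 ⟨s, Finset.mem_range.2 hs.1, hne⟩
  exact Set.Finite.subset (Set.Finite.biUnion (Finset.range t).finite_toSet
    (fun s _ => support_iter_finite M a h s)) hsub

/-- The linear functional `ℓ x = -∑ i, x i`. -/
def ell (x : Fin d → ℤ) : ℤ := -∑ i, x i

lemma ell_add (x y : Fin d → ℤ) : ell (x + y) = ell x + ell y := by
  simp [ell, Finset.sum_add_distrib]; ring

lemma exists_pos_dir (hd : 1 ≤ d) (M : Sandpile d) (hcomp : M.Complete) :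
    ∃ v ∈ M.N, 1 ≤ ell v := by
  obtain ⟨a, ha⟩ := hcomp (fun _ => (-1 : ℤ))
  by_contra h
  push_neg at h
  have hle : ∀ v ∈ M.N, ell v ≤ 0 := by
    intro v hv
    have := h v hv
    omega
  have h1 : ell ((fun _ => (-1 : ℤ)) : Fin d → ℤ) = (d : ℤ) := by
    simp [ell, Finset.sum_const, Finset.card_fin]
  have h2 : ell (∑ v ∈ M.N, (a v : ℤ) • v) ≤ 0 := by
    have hsum : ell (∑ v ∈ M.N, (a v : ℤ) • v) = ∑ v ∈ M.N, (a v : ℤ) * ell v := by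
      simp only [ell, Finset.sum_apply, Pi.smul_apply, smul_eq_mul]
      rw [Finset.sum_comm]
      rw [← Finset.sum_neg_distrib]
      refine Finset.sum_congr rfl (fun v _ => ?_)
      rw [← Finset.mul_sum]
      ring
    rw [hsum]
    refine Finset.sum_nonpos (fun v hv => ?_)
    exact mul_nonpos_of_nonneg_of_nonpos (by positivity) (hle v hv)
  rw [← ha, h1] at h2
  have : (1 : ℤ) ≤ (d : ℤ) := by exact_mod_cast hd
  omega

lemma support_addGrain_finite {n : ℕ} (c : (Fin d → ℤ) → ℕ) (hcube : InCube n c) :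
    (Function.support (addGrain c 0)).Finite := by
  have hcubefin : {x : Fin d → ℤ | ∀ i, 0 ≤ x i ∧ x i < (n : ℤ)}.Finite := by
    refine Set.Finite.subset (Set.Finite.pi (fun i => Set.finite_Icc (0 : ℤ) n)) ?_
    intro x hx
    simp only [Set.mem_pi, Set.mem_univ, Set.mem_Icc, forall_true_left]
    intro i
    have := hx i
    omega
  refine Set.Finite.subset (hcubefin.union (Set.finite_singleton 0)) ?_
  intro x hx
  simp only [Function.mem_support, addGrain] at hx
  by_cases hx0 : x = (0 : Fin d → ℤ)
  · exact Or.inr hx0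
  · left
    simp only [Set.mem_setOf_eq]
    by_contra h
    exact hx (by simp [hx0, hcube x h])

end SandAux
namespace SandAux

lemma main {d : ℕ} (hd : 1 ≤ d) (M : Sandpile d) (hcomp : M.Complete) (n : ℕ)
    (c : (Fin d → ℤ) → ℕ) (hstable : M.Stable c) (hcube : InCube n c) :
    ∀ t x, tc M (addGrain c 0) t x ≤ 1 := by
  set a := addGrain c 0 with ha
  intro t
  induction t with
  | zero => intro x; simp [tc_zero]
  | succ t ih =>
    intro x
    by_contra hbad
    push_neg at hbad
    rw [tc_succ] at hbad
    have hite : (if M.θ ≤ M.F^[t] a x then 1 else 0) ≤ 1 := by split <;> omega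
    have h1 : tc M a t x = 1 := by have := ih x; omega
    have h2 : M.θ ≤ M.F^[t] a x := by
      by_contra h'
      rw [if_neg h'] at hbad
      have := ih x; omega
    have hcons := conservation M a t x
    rw [h1, mul_one] at hcons
    have hsum_le : ∑ w ∈ M.N, M.D w * tc M a t (x + w) ≤ M.θ := by
      calc ∑ w ∈ M.N, M.D w * tc M a t (x + w) ≤ ∑ w ∈ M.N, M.D w * 1 :=
            Finset.sum_le_sum (fun w _ => Nat.mul_le_mul_left _ (ih _))
        _ = M.θ := by simp [Sandpile.θ]
    have hax : M.θ ≤ a x := by omega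
    have hx0 : x = 0 := by
      by_contra h'
      have hax' : a x = c x := by simp [ha, addGrain, h']
      have := hstable x
      omega
    subst hx0
    have haθ : a 0 ≤ M.θ := by
      have h0 := hstable 0
      have : a 0 = c 0 + 1 := by simp [ha, addGrain]
      omega
    have hsum_ge : M.θ ≤ ∑ w ∈ M.N, M.D w * tc M a t ((0 : Fin d → ℤ) + w) := by omega
    have hall : ∀ w ∈ M.N, tc M a t ((0 : Fin d → ℤ) + w) = 1 :=
      fullfire M (fun w => tc M a t ((0 : Fin d → ℤ) + w)) (fun w _ => ih _) hsum_ge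
    obtain ⟨vp, hvpN, hvp⟩ := exists_pos_dir hd M hcomp
    set S := {y | 1 ≤ tc M a t y} with hS
    have hSfin : S.Finite := toppled_finite M a (support_addGrain_finite c hcube) t
    have hvS : vp ∈ S := by
      have hvv := hall vp hvpN
      rw [zero_add] at hvv
      simp only [hS, Set.mem_setOf_eq]
      omega
    obtain ⟨xs, hxsS, hxsmax⟩ := Set.exists_max_image S ell hSfin ⟨vp, hvS⟩
    have hxs_pos : 1 ≤ ell xs := le_trans hvp (hxsmax vp hvS)
    have hxs_ne : xs ≠ 0 := by
      intro h0
      rw [h0] at hxs_pos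
      simp [ell] at hxs_pos
    have hxs_cube : ¬ ∀ i, 0 ≤ xs i ∧ xs i < (n : ℤ) := by
      intro hin
      have hnn : 0 ≤ ∑ i, xs i := Finset.sum_nonneg (fun i _ => (hin i).1)
      simp only [ell] at hxs_pos
      omega
    have haxs : a xs = 0 := by
      have hc : c xs = 0 := hcube xs hxs_cube
      simp [ha, addGrain, hxs_ne, hc]
    have hxsS' : 1 ≤ tc M a t xs := hxsS
    have hpos : 0 < ((Finset.range t).filter (fun s => M.θ ≤ M.F^[s] a xs)).card := hxsS'
    obtain ⟨s, hs⟩ := Finset.card_pos.mp hpos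
    simp only [Finset.mem_filter, Finset.mem_range] at hs
    have hcons2 := conservation M a s xs
    have hle1 : ∀ z, tc M a s z ≤ 1 := fun z => le_trans (tc_mono M a (le_of_lt hs.1) z) (ih z)
    have hsum2 : M.θ ≤ ∑ w ∈ M.N, M.D w * tc M a s (xs + w) := by
      have hF := hs.2
      omega
    have hallxs : ∀ w ∈ M.N, tc M a s (xs + w) = 1 :=
      fullfire M (fun w => tc M a s (xs + w)) (fun w _ => hle1 _) hsum2
    have hvfire : tc M a s (xs + vp) = 1 := hallxs vp hvpN
    have hmemS : xs + vp ∈ S := by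
      simp only [hS, Set.mem_setOf_eq]
      have := tc_mono M a (le_of_lt hs.1) (xs + vp)
      omega
    have hfin := hxsmax (xs + vp) hmemS
    rw [ell_add] at hfin
    omega

end SandAux
/-- strong monotonicity of avalanches started at the origin:
for a complete neighborhood and a stable configuration `c` within the
elementary hypercube of side `n`, in the parallel evolution from `c + 1_{0}`
every cell topples at most once. -/
theorem sandpile_avalanche_topples_at_most_once {d : ℕ} (hd : 1 ≤ d)
    (M : Sandpile d) (hcomp : M.Complete) (n : ℕ)
    (c : (Fin d → ℤ) → ℕ) (hstable : M.Stable c) (hcube : InCube n c)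
    (t : ℕ) (x : Fin d → ℤ) :
    ((Finset.range t).filter
      (fun s => M.θ ≤ M.F^[s] (addGrain c 0) x)).card ≤ 1 := by
  exact SandAux.main hd M hcomp n c hstable hcube t x
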